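/- Let k ≥ 1 be an integer, c = (c₁, c₂) ∈ ℂ², and let w ∈ ℂ with w ≠ 0 and w² ≠ 1; fix r₁, r₂ ∈ ℂ with r₁² = 1 + w, r₂² = 1 − w and set A₁ := 1/(2r₁) + 1/(2·i·r₂), A₂ := 1/(2r₁) − 1/(2·i·r₂). Let ξ₁, ξ₂ ∈ ℂ \ {0} with A₁ξ₁ + A₂ξ₁⁻¹ ≠ 0 and A₁ξ₂ + A₂ξ₂⁻¹ ≠ 0, let a₁, a₂ ∈ ℂ and set 𝓛(z₁, z₂) := a₁z₁ + a₂z₂, let χ : ℂ → ℂ satisfy χ(t + c₂) = χ(t) for all t ∈ ℂ, and let d₁, d₂ ∈ ℂ satisfy exp((𝓛(c) + d₁ − d₂)/2) = (a₁/2)ᵏ·(A₂ξ₂ + A₁ξ₂⁻¹)/(A₁ξ₁ + A₂ξ₁⁻¹) and exp((𝓛(c) + d₂ − d₁)/2) = (a₁/2)ᵏ·(A₂ξ₁ + A₁ξ₁⁻¹)/(A₁ξ₂ + A₂ξ₂⁻¹). Define f(z₁, z₂) := ((A₂ξ₂ + A₁ξ₂⁻¹)/√2)·exp((𝓛(z)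 + χ(z₂) − 𝓛(c) + d₂)/2) and g(z₁, z₂) := ((A₂ξ₁ + A₁ξ₁⁻¹)/√2)·exp((𝓛(z) + χ(z₂) − 𝓛(c) + d₁)/2). Then for all (z₁, z₂) ∈ ℂ²: (∂ᵏf/∂z₁ᵏ)(z)² + 2w·(∂ᵏf/∂z₁ᵏ)(z)·g(z₁ + c₁, z₂ + c₂) + g(z₁ + c₁, z₂ + c₂)² = exp(𝓛(z) + χ(z₂) + d₁) and (∂ᵏg/∂z₁ᵏ)(z)² + 2w·(∂ᵏg/∂z₁ᵏ)(z)·f(z₁ + c₁, z₂ + c₂) + f(z₁ + c₁, z₂ + c₂)² = exp(𝓛(z) + χ(z₂) + d₂). -/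

import Mathlib

lemma iter_exp (a b : ℂ) : ∀ (k : ℕ) (C z : ℂ),
    iteratedDeriv k (fun t => C * Complex.exp (a * t + b)) z
      = C * a ^ k * Complex.exp (a * z + b) := by
  intro k
  induction k with
  | zero => intro C z; simp
  | succ n ih =>
    intro C z
    rw [iteratedDeriv_succ']
    have hd : deriv (fun t => C * Complex.exp (a * t + b))
        = fun t => (C * a) * Complex.exp (a * t + b) := by
      funext t
      have h : HasDerivAt (fun t => C * Complex.exp (a * t + b))
          (C * (Complex.exp (a * t + b) * a)) t := by
        have := (((hasDerivAt_id t).const_mul a).add_const b).cexp.const_mul C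
        simpa using this
      rw [h.deriv]; ring
    rw [hd, ih (C * a) z]
    ring

lemma key_id (w r₁ r₂ A₁ A₂ : ℂ) (hw2 : w ^ 2 ≠ 1)
    (hr₁ : r₁ ^ 2 = 1 + w) (hr₂ : r₂ ^ 2 = 1 - w)
    (hA₁ : A₁ = 1 / (2 * r₁) + 1 / (2 * Complex.I * r₂))
    (hA₂ : A₂ = 1 / (2 * r₁) - 1 / (2 * Complex.I * r₂)) :
    A₁ ^ 2 + A₂ ^ 2 + 2 * w * A₁ * A₂ = 0 ∧ 2 * A₁ * A₂ + w * (A₁ ^ 2 + A₂ ^ 2) = 1 := by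
  have hr1 : r₁ ≠ 0 := by
    intro h; apply hw2; rw [h] at hr₁; simp at hr₁
    rw [show w = -1 by linear_combination -hr₁]; ring
  have hr2 : r₂ ≠ 0 := by
    intro h; apply hw2; rw [h] at hr₂; simp at hr₂
    rw [show w = 1 by linear_combination hr₂]; ring
  have hI : Complex.I ≠ 0 := Complex.I_ne_zero
  have hs : (Complex.I * r₂) ^ 2 = w - 1 := by
    rw [mul_pow, Complex.I_sq]; linear_combination -hr₂
  have hA1' : A₁ = (Complex.I * r₂ + r₁) / (2 * r₁ * (Complex.I * r₂)) := by
    rw [hA₁]; field_simp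
  have hA2' : A₂ = (Complex.I * r₂ - r₁) / (2 * r₁ * (Complex.I * r₂)) := by
    rw [hA₂]; field_simp
  have hD : 2 * r₁ * (Complex.I * r₂) * (2 * r₁ * (Complex.I * r₂)) * (2 * r₁ * (Complex.I * r₂)) ^ 2 ≠ 0 := by
    apply mul_ne_zero
    · exact mul_ne_zero (mul_ne_zero (mul_ne_zero two_ne_zero hr1) (mul_ne_zero hI hr2)) (mul_ne_zero (mul_ne_zero two_ne_zero hr1) (mul_ne_zero hI hr2))
    · exact pow_ne_zero _ (mul_ne_zero (mul_ne_zero two_ne_zero hr1) (mul_ne_zero hI hr2))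
  rw [hA1', hA2']
  constructor
  · field_simp
    linear_combination (2 + 2 * w) * hs + (2 - 2 * w) * hr₁
  · field_simp
    linear_combination (2 + 2 * w - 4 * r₁ ^ 2) * hs + (2 - 2 * w) * hr₁

lemma quad_id (w A₁ A₂ ξ : ℂ) (hξ : ξ ≠ 0)
    (h1 : A₁ ^ 2 + A₂ ^ 2 + 2 * w * A₁ * A₂ = 0)
    (h2 : 2 * A₁ * A₂ + w * (A₁ ^ 2 + A₂ ^ 2) = 1) :
    (A₁ * ξ + A₂ * ξ⁻¹) ^ 2 + 2 * w * (A₁ * ξ + A₂ * ξ⁻¹) * (A₂ * ξ + A₁ * ξ⁻¹)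
      + (A₂ * ξ + A₁ * ξ⁻¹) ^ 2 = 2 := by
  have hx : ξ * ξ⁻¹ = 1 := mul_inv_cancel₀ hξ
  linear_combination (ξ ^ 2 + (ξ⁻¹) ^ 2) * h1 + 2 * (ξ * ξ⁻¹) * h2 + 2 * hx

lemma final_step (w X Y E s : ℂ) (h21 : 2 * s⁻¹ ^ 2 = 1)
    (hq : X ^ 2 + 2 * w * X * Y + Y ^ 2 = 2) :
    (X / s * E) ^ 2 + 2 * w * (X / s * E) * (Y / s * E) + (Y / s * E) ^ 2 = E ^ 2 := by
  linear_combination (E ^ 2 * s⁻¹ ^ 2) * hq + E ^ 2 * h21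

theorem stmt_11 (k : ℕ) (hk : 1 ≤ k) (c₁ c₂ : ℂ) (w r₁ r₂ A₁ A₂ : ℂ)
    (hw : w ≠ 0) (hw2 : w ^ 2 ≠ 1)
    (hr₁ : r₁ ^ 2 = 1 + w) (hr₂ : r₂ ^ 2 = 1 - w)
    (hA₁ : A₁ = 1 / (2 * r₁) + 1 / (2 * Complex.I * r₂))
    (hA₂ : A₂ = 1 / (2 * r₁) - 1 / (2 * Complex.I * r₂))
    (ξ₁ ξ₂ : ℂ) (hξ₁ : ξ₁ ≠ 0) (hξ₂ : ξ₂ ≠ 0)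
    (hne₁ : A₁ * ξ₁ + A₂ * ξ₁⁻¹ ≠ 0) (hne₂ : A₁ * ξ₂ + A₂ * ξ₂⁻¹ ≠ 0)
    (a₁ a₂ : ℂ) (L : ℂ → ℂ → ℂ) (hL : ∀ z₁ z₂, L z₁ z₂ = a₁ * z₁ + a₂ * z₂)
    (χ : ℂ → ℂ) (hχ : ∀ t, χ (t + c₂) = χ t)
    (d₁ d₂ : ℂ)
    (hd₁ : Complex.exp ((L c₁ c₂ + d₁ - d₂) / 2)
      = (a₁ / 2) ^ k * ((A₂ * ξ₂ + A₁ * ξ₂⁻¹) / (A₁ * ξ₁ + A₂ * ξ₁⁻¹)))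
    (hd₂ : Complex.exp ((L c₁ c₂ + d₂ - d₁) / 2)
      = (a₁ / 2) ^ k * ((A₂ * ξ₁ + A₁ * ξ₁⁻¹) / (A₁ * ξ₂ + A₂ * ξ₂⁻¹)))
    (f g : ℂ → ℂ → ℂ)
    (hf : ∀ z₁ z₂, f z₁ z₂ = ((A₂ * ξ₂ + A₁ * ξ₂⁻¹) / (Real.sqrt 2 : ℂ))
      * Complex.exp ((L z₁ z₂ + χ z₂ - L c₁ c₂ + d₂) / 2))
    (hg : ∀ z₁ z₂, g z₁ z₂ = ((A₂ * ξ₁ + A₁ * ξ₁⁻¹) / (Real.sqrt 2 : ℂ))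
      * Complex.exp ((L z₁ z₂ + χ z₂ - L c₁ c₂ + d₁) / 2)) :
    ∀ z₁ z₂ : ℂ,
      (iteratedDeriv k (fun t => f t z₂) z₁) ^ 2
          + 2 * w * (iteratedDeriv k (fun t => f t z₂) z₁) * g (z₁ + c₁) (z₂ + c₂)
          + g (z₁ + c₁) (z₂ + c₂) ^ 2
        = Complex.exp (L z₁ z₂ + χ z₂ + d₁) ∧
      (iteratedDeriv k (fun t => g t z₂) z₁) ^ 2
          + 2 * w * (iteratedDeriv k (fun t => g t z₂) z₁) * f (z₁ + c₁) (z₂ + c₂)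
          + f (z₁ + c₁) (z₂ + c₂) ^ 2
        = Complex.exp (L z₁ z₂ + χ z₂ + d₂) := by
  intro z₁ z₂
  obtain ⟨h1, h2⟩ := key_id w r₁ r₂ A₁ A₂ hw2 hr₁ hr₂ hA₁ hA₂
  have hs2 : ((Real.sqrt 2 : ℝ) : ℂ) ≠ 0 := by
    norm_num [Real.sqrt_eq_zero']
  have hsq2 : ((Real.sqrt 2 : ℝ) : ℂ) ^ 2 = 2 := by
    norm_cast
    rw [Real.sq_sqrt] <;> norm_num
  have h21 : 2 * (((Real.sqrt 2 : ℝ) : ℂ))⁻¹ ^ 2 = 1 := by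
    rw [← hsq2]; field_simp
  set E₁ := Complex.exp ((L z₁ z₂ + χ z₂ + d₁) / 2) with hE₁
  set E₂ := Complex.exp ((L z₁ z₂ + χ z₂ + d₂) / 2) with hE₂
  have hE₁sq : Complex.exp (L z₁ z₂ + χ z₂ + d₁) = E₁ ^ 2 := by
    rw [hE₁, sq, ← Complex.exp_add]; ring_nf
  have hE₂sq : Complex.exp (L z₁ z₂ + χ z₂ + d₂) = E₂ ^ 2 := by
    rw [hE₂, sq, ← Complex.exp_add]; ring_nf
  have hB₁ : (A₁ * ξ₁ + A₂ * ξ₁⁻¹) * (A₁ * ξ₁ + A₂ * ξ₁⁻¹)⁻¹ = 1 := mul_inv_cancel₀ hne₁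
  have hB₂ : (A₁ * ξ₂ + A₂ * ξ₂⁻¹) * (A₁ * ξ₂ + A₂ * ξ₂⁻¹)⁻¹ = 1 := mul_inv_cancel₀ hne₂
  have hFfun : (fun t => f t z₂) = fun t =>
      ((A₂ * ξ₂ + A₁ * ξ₂⁻¹) / (Real.sqrt 2 : ℂ)) *
        Complex.exp ((a₁ / 2) * t + (a₂ * z₂ + χ z₂ - L c₁ c₂ + d₂) / 2) := by
    funext t; rw [hf, hL]; congr 1; ring
  have hGfun : (fun t => g t z₂) = fun t =>
      ((A₂ * ξ₁ + A₁ * ξ₁⁻¹) / (Real.sqrt 2 : ℂ)) *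
        Complex.exp ((a₁ / 2) * t + (a₂ * z₂ + χ z₂ - L c₁ c₂ + d₁) / 2) := by
    funext t; rw [hg, hL]; congr 1; ring
  have hmulE₁ : Complex.exp ((a₁ / 2) * z₁ + (a₂ * z₂ + χ z₂ - L c₁ c₂ + d₂) / 2) *
      Complex.exp ((L c₁ c₂ + d₁ - d₂) / 2) = E₁ := by
    rw [hE₁, ← Complex.exp_add, hL z₁ z₂]; congr 1; ring
  have hmulE₂ : Complex.exp ((a₁ / 2) * z₁ + (a₂ * z₂ + χ z₂ - L c₁ c₂ + d₁) / 2) *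
      Complex.exp ((L c₁ c₂ + d₂ - d₁) / 2) = E₂ := by
    rw [hE₂, ← Complex.exp_add, hL z₁ z₂]; congr 1; ring
  have hF : iteratedDeriv k (fun t => f t z₂) z₁
      = (A₁ * ξ₁ + A₂ * ξ₁⁻¹) / (Real.sqrt 2 : ℂ) * E₁ := by
    rw [hFfun, iter_exp, ← hmulE₁, hd₁]
    linear_combination (-((A₂ * ξ₂ + A₁ * ξ₂⁻¹) * (a₁ / 2) ^ k *
      Complex.exp ((a₁ / 2) * z₁ + (a₂ * z₂ + χ z₂ - L c₁ c₂ + d₂) / 2)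
        / ((Real.sqrt 2 : ℝ) : ℂ))) * hB₁
  have hG : iteratedDeriv k (fun t => g t z₂) z₁
      = (A₁ * ξ₂ + A₂ * ξ₂⁻¹) / (Real.sqrt 2 : ℂ) * E₂ := by
    rw [hGfun, iter_exp, ← hmulE₂, hd₂]
    linear_combination (-((A₂ * ξ₁ + A₁ * ξ₁⁻¹) * (a₁ / 2) ^ k *
      Complex.exp ((a₁ / 2) * z₁ + (a₂ * z₂ + χ z₂ - L c₁ c₂ + d₁) / 2)
        / ((Real.sqrt 2 : ℝ) : ℂ))) * hB₂
  have hGc : g (z₁ + c₁) (z₂ + c₂) = (A₂ * ξ₁ + A₁ * ξ₁⁻¹) / (Real.sqrt 2 : ℂ) * E₁ := by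
    rw [hg, hχ, hE₁]; congr 2; rw [hL, hL, hL]; ring
  have hFc : f (z₁ + c₁) (z₂ + c₂) = (A₂ * ξ₂ + A₁ * ξ₂⁻¹) / (Real.sqrt 2 : ℂ) * E₂ := by
    rw [hf, hχ, hE₂]; congr 2; rw [hL, hL, hL]; ring
  have hq₁ := quad_id w A₁ A₂ ξ₁ hξ₁ h1 h2
  have hq₂ := quad_id w A₁ A₂ ξ₂ hξ₂ h1 h2
  constructor
  · rw [hF, hGc, hE₁sq]
    exact final_step w _ _ E₁ _ h21 hq₁
  · rw [hG, hFc, hE₂sq]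
    exact final_step w _ _ E₂ _ h21 hq₂
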